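/- arXiv:2205.02391 — 2 statements merged into one kernel-verified Lean document; each statement's English description precedes it below -/
import Mathlib

section
/- Let F be a non-Archimedean local field with residue characteristic p ≠ 2, residue field of size q, and let ε be a uniformizer of F. Then the volume of the set {(x,y) ∈ F² : |x² - εy²| = 1} with respect to the product Haar measure giving O_F² volume 1 equals (q-1)/q. -/
open MeasureTheory

/-- For a non-Archimedean local field `F` of residue characteristic `p ≠ 2`, residue
field of size `q`, and a uniformizer `ε`, the set `{(x,y) ∈ F² : |x² - εy²| = 1}` has
volume `(q-1)/q` for the product Haar measure with `vol(O_F) = 1`. -/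
theorem volume_norm_one_set_ramified
    (F : Type*) [NormedField F] [MeasurableSpace F] [BorelSpace F]
    (hna : ∀ x y : F, ‖x + y‖ ≤ max ‖x‖ ‖y‖)
    (μ : Measure F) [μ.IsAddLeftInvariant]
    (q : ℕ) (hq : 1 < q)
    (hval : ∀ x : F, x ≠ 0 → ∃ n : ℤ, ‖x‖ = (q : ℝ) ^ n)
    (hball : ∀ n : ℤ, μ {x : F | ‖x‖ ≤ (q : ℝ) ^ (-n)} = (q : ENNReal) ^ (-n))
    (hp2 : ‖(2 : F)‖ = 1)
    (ε : F) (hεunif : ‖ε‖ = ((q : ℝ))⁻¹) :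
    (μ.prod μ) {p : F × F | ‖p.1 ^ 2 - ε * p.2 ^ 2‖ = 1}
      = ((q : ENNReal) - 1) / q := by
  have hq1 : (1:ℝ) < q := by exact_mod_cast hq
  have hq0 : (0:ℝ) < q := by linarith
  -- ultrametric: strict inequality gives equality of norms
  have hmax : ∀ a b : F, ‖b‖ < ‖a‖ → ‖a - b‖ = ‖a‖ := by
    intro a b hb
    have h1 : ‖a - b‖ ≤ max ‖a‖ ‖b‖ := by simpa [sub_eq_add_neg] using hna a (-b)
    have h2 : ‖a‖ ≤ max ‖a - b‖ ‖b‖ := by simpa using hna (a - b) b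
    rcases le_max_iff.mp h2 with h | h
    · exact le_antisymm (by simpa [max_eq_left hb.le] using h1) h
    · linarith
  -- set equality
  have hset : {p : F × F | ‖p.1 ^ 2 - ε * p.2 ^ 2‖ = 1}
      = {x : F | ‖x‖ = 1} ×ˢ {y : F | ‖y‖ ≤ 1} := by
    ext ⟨x, y⟩
    simp only [Set.mem_setOf_eq, Set.mem_prod]
    constructor
    · intro h
      by_cases hy0 : y = 0
      · subst hy0
        simp only [mul_zero, zero_pow, sub_zero, norm_pow, ne_eq, OfNat.ofNat_ne_zero,
          not_false_iff, mul_zero] at h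
        have hx2 : ‖x‖ ^ 2 = 1 := by simpa [norm_pow] using h
        have hx : ‖x‖ = 1 := by
          rw [← Real.sqrt_sq (norm_nonneg x), hx2, Real.sqrt_one]
        exact ⟨hx, by simp⟩
      · obtain ⟨m, hm⟩ := hval y hy0
        have hεyy : ‖ε * y ^ 2‖ = (q:ℝ) ^ (2*m - 1) := by
          rw [norm_mul, norm_pow, hm, hεunif, ← zpow_natCast ((q:ℝ)^m) 2, ← zpow_mul,
            zpow_sub₀ hq0.ne', zpow_one, inv_mul_eq_div]
          ring_nf
        have hεy1 : ‖ε * y ^ 2‖ ≠ 1 := by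
          rw [hεyy]
          intro hc
          have : (2*m - 1 : ℤ) = 0 := by
            have := zpow_right_injective₀ hq0 hq1.ne' (by simpa using hc : (q:ℝ)^(2*m-1) = (q:ℝ)^(0:ℤ))
            exact this
          omega
        by_cases hx0 : x = 0
        · subst hx0
          exfalso
          apply hεy1
          simpa [zero_pow] using h
        · obtain ⟨n, hn⟩ := hval x hx0
          have hxx : ‖x ^ 2‖ = (q:ℝ) ^ (2*n) := by
            rw [norm_pow, hn, ← zpow_natCast ((q:ℝ)^n) 2, ← zpow_mul]
            ring_nf
          have hne : ‖ε * y ^ 2‖ ≠ ‖x ^ 2‖ := by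
            rw [hεyy, hxx]
            intro hc
            have := zpow_right_injective₀ hq0 hq1.ne' hc
            omega
          rcases lt_or_gt_of_ne hne with hlt | hgt
          · -- ‖εy²‖ < ‖x²‖, so norm = ‖x²‖ = 1
            have h1 : ‖x ^ 2‖ = 1 := by rw [← hmax _ _ hlt]; exact h
            have hn0 : n = 0 := by
              have : (2*n : ℤ) = 0 :=
                zpow_right_injective₀ hq0 hq1.ne'
                  (show (q:ℝ)^(2*n) = (q:ℝ)^(0:ℤ) by rw [← hxx, h1, zpow_zero])
              omega
            have hx : ‖x‖ = 1 := by rw [hn, hn0, zpow_zero]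
            have hmle : m ≤ 0 := by
              have : (q:ℝ) ^ (2*m-1) < (q:ℝ) ^ (2*n) := by rw [← hεyy, ← hxx]; exact hlt
              have := (zpow_lt_zpow_iff_right₀ hq1).mp this
              omega
            have hy : ‖y‖ ≤ 1 := by
              rw [hm]
              calc (q:ℝ)^m ≤ (q:ℝ)^(0:ℤ) := (zpow_le_zpow_iff_right₀ hq1).mpr hmle
                _ = 1 := zpow_zero _
            exact ⟨hx, hy⟩
          · -- ‖x²‖ < ‖εy²‖, so norm = ‖εy²‖ ≠ 1, contradiction
            exfalso
            apply hεy1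
            have : ‖x ^ 2 - ε * y ^ 2‖ = ‖ε * y ^ 2‖ := by
              rw [show x ^ 2 - ε * y ^ 2 = -(ε * y ^ 2 - x ^ 2) by ring, norm_neg]
              exact hmax _ _ hgt
            rw [← this]; exact h
    · rintro ⟨hx, hy⟩
      have hlt : ‖ε * y ^ 2‖ < ‖x ^ 2‖ := by
        rw [norm_mul, norm_pow, norm_pow, hx, hεunif, one_pow]
        have h1 : ‖y‖ ^ 2 ≤ 1 := by nlinarith [norm_nonneg y]
        have h2 : (0:ℝ) < (q:ℝ)⁻¹ := by positivity
        have h3 : (q:ℝ)⁻¹ < 1 := by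
          rw [inv_lt_one_iff₀]; right; exact hq1
        nlinarith
      rw [hmax _ _ hlt, norm_pow, hx, one_pow]
  -- sigma-finiteness
  haveI : SigmaFinite μ := by
    refine ⟨⟨⟨fun n => {x : F | ‖x‖ ≤ (q:ℝ) ^ (n:ℤ)}, fun _ => trivial, ?_, ?_⟩⟩⟩
    · intro n
      have h := hball (-(n:ℤ))
      rw [neg_neg] at h
      rw [h]
      exact ENNReal.zpow_lt_top (by exact_mod_cast (Nat.zero_lt_of_lt hq).ne') (by simp) _
    · apply Set.eq_univ_of_forall
      intro x
      obtain ⟨n, hn⟩ := pow_unbounded_of_one_lt ‖x‖ hq1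
      exact Set.mem_iUnion.mpr ⟨n, by simpa [zpow_natCast] using hn.le⟩
  -- ball measures
  have h0 : μ {x : F | ‖x‖ ≤ 1} = 1 := by simpa using hball 0
  have h1 : μ {x : F | ‖x‖ ≤ (q:ℝ)⁻¹} = (q : ENNReal)⁻¹ := by
    have := hball 1
    rwa [show ((q:ℝ)^(-1:ℤ)) = (q:ℝ)⁻¹ by simp,
      show ((q:ENNReal)^(-1:ℤ)) = (q:ENNReal)⁻¹ from zpow_neg_one _] at this
  have hmeas : MeasurableSet {x : F | ‖x‖ ≤ (q:ℝ)⁻¹} :=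
    measurableSet_le measurable_norm measurable_const
  have hsplit : {x : F | ‖x‖ ≤ 1} = {x : F | ‖x‖ = 1} ∪ {x : F | ‖x‖ ≤ (q:ℝ)⁻¹} := by
    ext x
    simp only [Set.mem_setOf_eq, Set.mem_union]
    constructor
    · intro h
      by_cases hx : ‖x‖ = 1
      · exact Or.inl hx
      · right
        by_cases hx0 : x = 0
        · subst hx0; simp
        · obtain ⟨n, hn⟩ := hval x hx0
          have hle : n ≤ 0 := by
            have : (q:ℝ)^n ≤ (q:ℝ)^(0:ℤ) := by rw [zpow_zero, ← hn]; exact h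
            exact (zpow_le_zpow_iff_right₀ hq1).mp this
          have hne : n ≠ 0 := by
            intro hc; apply hx; rw [hn, hc, zpow_zero]
          have : n ≤ -1 := by omega
          rw [hn]
          calc (q:ℝ)^n ≤ (q:ℝ)^(-1:ℤ) := (zpow_le_zpow_iff_right₀ hq1).mpr this
            _ = (q:ℝ)⁻¹ := by rw [zpow_neg, zpow_one]
    · rintro (h | h)
      · exact h.le
      · calc ‖x‖ ≤ (q:ℝ)⁻¹ := h
          _ ≤ 1 := by rw [inv_le_one_iff₀]; right; exact hq1.le
  have hdisj : Disjoint {x : F | ‖x‖ = 1} {x : F | ‖x‖ ≤ (q:ℝ)⁻¹} := by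
    rw [Set.disjoint_left]
    intro x hx1 hx2
    simp only [Set.mem_setOf_eq] at hx1 hx2
    rw [hx1] at hx2
    have : (q:ℝ)⁻¹ < 1 := by rw [inv_lt_one_iff₀]; right; exact hq1
    linarith
  have hadd : (1 : ENNReal) = μ {x : F | ‖x‖ = 1} + (q : ENNReal)⁻¹ := by
    rw [← h0, hsplit, measure_union hdisj hmeas, h1]
  have hqE0 : (q : ENNReal) ≠ 0 := by exact_mod_cast (Nat.zero_lt_of_lt hq).ne'
  have hqEtop : (q : ENNReal) ≠ ⊤ := by simp
  have hmeas1 : μ {x : F | ‖x‖ = 1} = 1 - (q : ENNReal)⁻¹ :=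
    ENNReal.eq_sub_of_add_eq (by simp [hqE0]) hadd.symm
  rw [hset, Measure.prod_prod, hmeas1, h0, mul_one]
  rw [ENNReal.sub_div (fun _ _ => hqE0), ENNReal.div_self hqE0 hqEtop, one_div]
end

section
/- Let F be a non-Archimedean local field with odd residue characteristic and residue field of size q, and let ε be a uniformizer. Then ∫_F |1 - εt²|^{-1} |dt| = 2, where |dt| is the Haar measure giving O_F volume 1. -/
open MeasureTheory

/-- For a non-Archimedean local field `F` of odd residue characteristic, residue field
of size `q`, and a uniformizer `ε`, one has `∫_F |1 - εt²|⁻¹ |dt| = 2`,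
where `|dt|` gives `O_F` volume `1`. -/
theorem integral_inv_norm_one_sub_eps_t_sq_ramified
    (F : Type*) [NormedField F] [MeasurableSpace F] [BorelSpace F]
    (hna : ∀ x y : F, ‖x + y‖ ≤ max ‖x‖ ‖y‖)
    (μ : Measure F) [μ.IsAddLeftInvariant]
    (q : ℕ) (hq : 1 < q)
    (hval : ∀ x : F, x ≠ 0 → ∃ n : ℤ, ‖x‖ = (q : ℝ) ^ n)
    (hball : ∀ n : ℤ, μ {x : F | ‖x‖ ≤ (q : ℝ) ^ (-n)} = (q : ENNReal) ^ (-n))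
    (hp2 : ‖(2 : F)‖ = 1)
    (ε : F) (hεunif : ‖ε‖ = ((q : ℝ))⁻¹) :
    ∫⁻ t : F, (ENNReal.ofReal ‖1 - ε * t ^ 2‖)⁻¹ ∂μ = 2 := by
  have hqR : (1:ℝ) < q := by exact_mod_cast hq
  have hqR0 : (0:ℝ) < q := lt_trans one_pos hqR
  -- ultrametric facts
  have key1 : ∀ x : F, ‖x‖ < 1 → ‖1 - x‖ = 1 := by
    intro x hx
    have h1 : ‖1 - x‖ ≤ 1 := by
      have := hna 1 (-x)
      simp only [norm_one, norm_neg] at this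
      rw [← sub_eq_add_neg] at this
      exact this.trans (max_le le_rfl hx.le)
    have h2 : (1:ℝ) ≤ max ‖1 - x‖ ‖x‖ := by
      have := hna (1 - x) x
      simpa using this
    rcases max_cases ‖1 - x‖ ‖x‖ with ⟨he, _⟩ | ⟨he, _⟩
    · exact le_antisymm h1 (he ▸ h2)
    · exact absurd (h2.trans_eq he) (not_le.mpr hx)
  have key2 : ∀ x : F, 1 < ‖x‖ → ‖1 - x‖ = ‖x‖ := by
    intro x hx
    have h1 : ‖1 - x‖ ≤ ‖x‖ := by
      have := hna 1 (-x)
      simp only [norm_one, norm_neg] at this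
      rw [← sub_eq_add_neg] at this
      exact this.trans (max_le hx.le le_rfl)
    have h2 : ‖x‖ ≤ max ‖x - 1‖ 1 := by
      have := hna (x - 1) 1
      simpa using this
    rw [norm_sub_rev x 1] at h2
    rcases max_cases ‖1 - x‖ (1:ℝ) with ⟨he, _⟩ | ⟨he, hle⟩
    · exact le_antisymm h1 (he ▸ h2)
    · exact absurd ((h2.trans_eq he)) (not_le.mpr hx)
  -- the balls
  set B : ℕ → Set F := fun k => {x : F | ‖x‖ ≤ (q:ℝ) ^ k} with hB
  have hBmeas : ∀ k, MeasurableSet (B k) := fun k =>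
    (isClosed_le continuous_norm continuous_const).measurableSet
  have hBvol : ∀ k, μ (B k) = (q : ENNReal) ^ k := by
    intro k
    have := hball (-(k:ℤ))
    rw [neg_neg] at this
    simp only [zpow_natCast] at this
    exact this
  -- the annuli
  set S : ℕ → Set F := fun n => {t : F | (q:ℝ) ^ n < ‖t‖ ∧ ‖t‖ ≤ (q:ℝ) ^ (n+1)} with hS
  have hSmeas : ∀ n, MeasurableSet (S n) :=
    fun n => ((isOpen_lt continuous_const continuous_norm).measurableSet).inter
      (isClosed_le continuous_norm continuous_const).measurableSet
  -- norms on the annuli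
  have hSnorm : ∀ n : ℕ, ∀ t ∈ S n, ‖t‖ = (q:ℝ) ^ (n+1) := by
    intro n t ht
    obtain ⟨h1, h2⟩ := ht
    have ht0 : t ≠ 0 := by
      intro h; rw [h, norm_zero] at h1
      exact absurd h1 (not_lt.mpr (by positivity))
    obtain ⟨m, hm⟩ := hval t ht0
    rw [hm] at h1 h2 ⊢
    have e1 : (q:ℝ) ^ (n:ℤ) < (q:ℝ) ^ m := by rw [zpow_natCast]; exact h1
    have e2 : (q:ℝ) ^ m ≤ (q:ℝ) ^ ((n:ℤ)+1) := by
      rw [show ((n:ℤ)+1) = ((n+1 : ℕ) : ℤ) by push_cast; ring, zpow_natCast]; exact h2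
    have l1 : (n:ℤ) < m := (zpow_lt_zpow_iff_right₀ hqR).mp e1
    have l2 : m ≤ (n:ℤ) + 1 := (zpow_le_zpow_iff_right₀ hqR).mp e2
    have : m = (n:ℤ) + 1 := le_antisymm l2 (by omega)
    rw [this, show ((n:ℤ)+1) = ((n+1 : ℕ) : ℤ) by push_cast; ring, zpow_natCast]
  -- complement of B 0 is the union of the annuli
  have hcompl : (B 0)ᶜ = ⋃ n, S n := by
    ext t
    simp only [hB, hS, Set.mem_compl_iff, Set.mem_setOf_eq, Set.mem_iUnion, pow_zero, not_le]
    constructor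
    · intro ht
      have ht0 : t ≠ 0 := by
        intro h; rw [h, norm_zero] at ht; linarith
      obtain ⟨m, hm⟩ := hval t ht0
      have hm1 : 1 ≤ m := by
        by_contra h
        push_neg at h
        have : (q:ℝ) ^ m ≤ (q:ℝ) ^ (0:ℤ) := (zpow_le_zpow_iff_right₀ hqR).mpr (by omega)
        rw [zpow_zero] at this
        rw [hm] at ht; linarith
      refine ⟨(m-1).toNat, ?_, ?_⟩
      · have hn : ((m-1).toNat : ℤ) = m - 1 := Int.toNat_of_nonneg (by omega)
        have : (q:ℝ) ^ (((m-1).toNat : ℤ)) < (q:ℝ) ^ m :=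
          (zpow_lt_zpow_iff_right₀ hqR).mpr (by omega)
        rw [zpow_natCast] at this
        rw [hm]; exact this
      · have hn : (((m-1).toNat + 1 : ℕ) : ℤ) = m := by
          have := Int.toNat_of_nonneg (show (0:ℤ) ≤ m - 1 by omega)
          push_cast; omega
        have : (q:ℝ) ^ m = (q:ℝ) ^ ((m-1).toNat + 1 : ℕ) := by
          rw [← zpow_natCast, hn]
        rw [hm, this]
    · rintro ⟨n, h1, h2⟩
      calc (1:ℝ) ≤ (q:ℝ) ^ n := one_le_pow₀ hqR.le
        _ < ‖t‖ := h1
  -- ENNReal basics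
  set Q : ENNReal := (q : ENNReal) with hQ
  have hQ0 : Q ≠ 0 := by
    simp [hQ]; omega
  have hQt : Q ≠ ⊤ := by simp [hQ]
  have hQ1 : 1 < Q := by rw [hQ]; exact_mod_cast hq
  -- value of the integrand on B 0
  have hf0 : ∀ t ∈ B 0, (ENNReal.ofReal ‖1 - ε * t ^ 2‖)⁻¹ = 1 := by
    intro t ht
    have h1 : ‖t‖ ≤ 1 := by simpa [hB] using ht
    have hnorm : ‖ε * t ^ 2‖ < 1 := by
      rw [norm_mul, norm_pow, hεunif]
      have h2 : ‖t‖ ^ 2 ≤ 1 := by nlinarith [norm_nonneg t]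
      calc (q:ℝ)⁻¹ * ‖t‖^2 ≤ (q:ℝ)⁻¹ * 1 :=
            mul_le_mul_of_nonneg_left h2 (by positivity)
        _ < 1 := by rw [mul_one]; exact inv_lt_one_of_one_lt₀ hqR
    rw [key1 _ hnorm]
    simp
  -- value of the integrand on S n
  have hfS : ∀ n : ℕ, ∀ t ∈ S n,
      (ENNReal.ofReal ‖1 - ε * t ^ 2‖)⁻¹ = (Q ^ (2*n+1))⁻¹ := by
    intro n t ht
    have hnt := hSnorm n t ht
    have hnorm : ‖ε * t ^ 2‖ = (q:ℝ) ^ (2*n+1) := by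
      rw [norm_mul, norm_pow, hεunif, hnt, ← pow_mul,
        show (n+1)*2 = (2*n+1) + 1 by ring, pow_succ]
      field_simp
    have h1 : 1 < ‖ε * t^2‖ := by
      rw [hnorm]; exact one_lt_pow₀ hqR (by omega)
    rw [key2 _ h1, hnorm, ENNReal.ofReal_pow hqR0.le, ENNReal.ofReal_natCast]
  -- split the integral
  rw [← lintegral_add_compl (fun t => (ENNReal.ofReal ‖1 - ε * t ^ 2‖)⁻¹) (hBmeas 0) (μ := μ)]
  have hI0 : ∫⁻ t in B 0, (ENNReal.ofReal ‖1 - ε * t ^ 2‖)⁻¹ ∂μ = 1 := by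
    rw [setLIntegral_congr_fun (hBmeas 0)
      (fun t ht => hf0 t ht)]
    rw [setLIntegral_one, hBvol 0, pow_zero]
  have hdisj : Pairwise (Function.onFun Disjoint S) := by
    have key : ∀ m n : ℕ, m < n → Disjoint (S m) (S n) := by
      intro m n h
      rw [Set.disjoint_left]
      rintro t ⟨_, h2⟩ ⟨h3, _⟩
      have : (q:ℝ)^(m+1) ≤ (q:ℝ)^n := pow_le_pow_right₀ hqR.le (by omega)
      exact absurd (h3.trans_le h2) (not_lt.mpr this)
    intro m n hmn
    rcases lt_or_gt_of_ne hmn with h | h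
    · exact key m n h
    · exact (key n m h).symm
  have hIc : ∫⁻ t in (B 0)ᶜ, (ENNReal.ofReal ‖1 - ε * t ^ 2‖)⁻¹ ∂μ = 1 := by
    rw [hcompl, lintegral_iUnion hSmeas hdisj]
    have hterm : ∀ n : ℕ, ∫⁻ t in S n, (ENNReal.ofReal ‖1 - ε * t ^ 2‖)⁻¹ ∂μ
        = (Q - 1) * (Q⁻¹) ^ (n+1) := by
      intro n
      rw [setLIntegral_congr_fun (hSmeas n)
        (fun t ht => hfS n t ht)]
      rw [setLIntegral_const]
      have hSn : S n = B (n+1) \ B n := by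
        ext t
        simp only [hS, hB, Set.mem_setOf_eq, Set.mem_diff, not_le]
        tauto
      have hμS : μ (S n) = Q^(n+1) - Q^n := by
        have hsub : B n ⊆ B (n+1) := fun t ht =>
          le_trans ht (pow_le_pow_right₀ hqR.le (Nat.le_succ n))
        have hfin : μ (B n) ≠ ⊤ := by rw [hBvol n]; exact ENNReal.pow_ne_top hQt
        rw [hSn, measure_diff hsub (hBmeas n).nullMeasurableSet hfin, hBvol, hBvol]
      rw [hμS]
      have hfac : Q^(n+1) - Q^n = Q^n * (Q - 1) := by
        rw [ENNReal.mul_sub (fun _ _ => ENNReal.pow_ne_top hQt), mul_one, ← pow_succ]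
      rw [hfac]
      have hpow : (Q ^ (2*n+1))⁻¹ = (Q^n)⁻¹ * (Q^(n+1))⁻¹ := by
        rw [show 2*n+1 = n + (n+1) by ring, pow_add,
          ENNReal.mul_inv (Or.inl (pow_ne_zero _ hQ0)) (Or.inl (ENNReal.pow_ne_top hQt))]
      rw [hpow]
      calc (Q^n)⁻¹ * (Q^(n+1))⁻¹ * (Q^n * (Q - 1))
          = (Q^n * (Q^n)⁻¹) * ((Q - 1) * (Q^(n+1))⁻¹) := by ring
        _ = (Q - 1) * (Q^(n+1))⁻¹ := by
            rw [ENNReal.mul_inv_cancel (pow_ne_zero _ hQ0) (ENNReal.pow_ne_top hQt), one_mul]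
        _ = (Q - 1) * Q⁻¹^(n+1) := by rw [← ENNReal.inv_pow]
    simp only [hterm]
    rw [ENNReal.tsum_mul_left]
    have : ∑' n : ℕ, Q⁻¹ ^ (n+1) = (1 - Q⁻¹)⁻¹ * Q⁻¹ := by
      simp only [pow_succ]
      rw [ENNReal.tsum_mul_right, ENNReal.tsum_geometric]
    rw [this]
    have hsub : (Q - 1) * Q⁻¹ = 1 - Q⁻¹ := by
      rw [ENNReal.sub_mul (fun _ _ => ENNReal.inv_ne_top.mpr hQ0),
        ENNReal.mul_inv_cancel hQ0 hQt, one_mul]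
    have ha0 : 1 - Q⁻¹ ≠ 0 := by
      have : Q⁻¹ < 1 := ENNReal.inv_lt_one.mpr hQ1
      exact (tsub_pos_of_lt this).ne'
    have hat : 1 - Q⁻¹ ≠ ⊤ := by
      exact ne_top_of_le_ne_top (by simp) tsub_le_self
    calc (Q - 1) * ((1 - Q⁻¹)⁻¹ * Q⁻¹)
        = ((Q - 1) * Q⁻¹) * (1 - Q⁻¹)⁻¹ := by ring
      _ = (1 - Q⁻¹) * (1 - Q⁻¹)⁻¹ := by rw [hsub]
      _ = 1 := ENNReal.mul_inv_cancel ha0 hat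
  rw [hI0, hIc]
  norm_num
end
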